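/- Let (K_m)_{m≥1} and (e_m)_{m≥1} be sequences of strictly positive reals such that K_m/(A m^{-α}) → 1 and e_m/(B m^{-β}) → 1 as m → ∞, where A, B ∈ (0,∞) and α, β ∈ ℝ satisfy α ≤ 1 < α + β (so that β > 0 and χ := Σ_{m≥1} K_m e_m < ∞). Set γ = (α+β−1)/β ∈ (0,1]. Then lim_{t→∞} t^γ · Σ_{m≥1} K_m e_m e^{−e_m t} = (A/β) B^{1−γ} Γ(γ), where Γ is Euler's Gamma function. Equivalently, the wake-up time τ with survival function P(τ > t) = χ^{−1} Σ_{m≥1} K_m e_m e^{−e_m t} satisfies P(τ > t) ∼ C t^{−γ} as t → ∞, with C = A B^{1−γ} Γ(γ)/(χ β). -/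

import Mathlib

open Filter MeasureTheory Real Set

namespace SeedbankAux

/-- The basic unimodal profile `x ↦ x^{-q} e^{-c x^{-β}}`. -/
noncomputable def fc (q β c x : ℝ) : ℝ := x ^ (-q) * Real.exp (-(c * x ^ (-β)))

/-- Its mode. -/
noncomputable def xs (q β c : ℝ) : ℝ := (c * β / q) ^ (1 / β)

lemma fc_nonneg (q β c : ℝ) {x : ℝ} (hx : 0 ≤ x) : 0 ≤ fc q β c x :=
  mul_nonneg (Real.rpow_nonneg hx _) (Real.exp_pos _).le

lemma xs_pos {q β c : ℝ} (hq : 0 < q) (hβ : 0 < β) (hc : 0 < c) : 0 < xs q β c :=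
  Real.rpow_pos_of_pos (by positivity) _

lemma xs_rpow_neg_beta {q β c : ℝ} (hq : 0 < q) (hβ : 0 < β) (hc : 0 < c) :
    (xs q β c) ^ (-β) = q / (c * β) := by
  rw [xs, ← Real.rpow_mul (by positivity)]
  have : 1 / β * (-β) = -1 := by field_simp
  rw [this, Real.rpow_neg_one]
  rw [inv_div]

lemma fc_hasDerivAt (q β c : ℝ) {x : ℝ} (hx : 0 < x) :
    HasDerivAt (fc q β c)
      (x ^ (-q - 1) * Real.exp (-(c * x ^ (-β))) * (c * β * x ^ (-β) - q)) x := by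
  have h1 : HasDerivAt (fun x : ℝ => x ^ (-q)) (-q * x ^ (-q - 1)) x :=
    Real.hasDerivAt_rpow_const (Or.inl hx.ne')
  have h2 : HasDerivAt (fun x : ℝ => x ^ (-β)) (-β * x ^ (-β - 1)) x :=
    Real.hasDerivAt_rpow_const (Or.inl hx.ne')
  have h4 : HasDerivAt (fun x : ℝ => Real.exp (-(c * x ^ (-β))))
      (Real.exp (-(c * x ^ (-β))) * (-(c * (-β * x ^ (-β - 1))))) x :=
    ((h2.const_mul c).neg).exp
  have h5 := h1.mul h4
  refine h5.congr_deriv (Eq.symm ?_)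
  have e1 : x ^ (-q - 1) * x ^ (-β) = x ^ (-q) * x ^ (-β - 1) := by
    rw [← Real.rpow_add hx, ← Real.rpow_add hx]; ring_nf
  linear_combination (c * β * Real.exp (-(c * x ^ (-β)))) * e1


lemma fc_continuousOn (q β c : ℝ) {s : Set ℝ} (hs : ∀ x ∈ s, x ≠ 0) :
    ContinuousOn (fc q β c) s := by
  intro x hx
  have h1 : ContinuousAt (fun x : ℝ => x ^ (-q)) x :=
    Real.continuousAt_rpow_const x (-q) (Or.inl (hs x hx))
  have h2 : ContinuousAt (fun x : ℝ => x ^ (-β)) x :=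
    Real.continuousAt_rpow_const x (-β) (Or.inl (hs x hx))
  have h3 : ContinuousAt (fun x : ℝ => Real.exp (-(c * x ^ (-β)))) x :=
    Real.continuous_exp.continuousAt.comp ((h2.const_mul c).neg)
  exact (h1.mul h3).continuousWithinAt

lemma fc_zero {q : ℝ} (hq : 0 < q) (β c : ℝ) : fc q β c 0 = 0 := by
  unfold fc
  rw [Real.zero_rpow (by intro h; rw [neg_eq_zero] at h; exact hq.ne' h), zero_mul]

lemma fc_strictMonoOn {q β c : ℝ} (hq : 0 < q) (hβ : 0 < β) (hc : 0 < c) :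
    StrictMonoOn (fc q β c) (Ioc 0 (xs q β c)) := by
  apply strictMonoOn_of_deriv_pos (convex_Ioc _ _)
  · exact fc_continuousOn _ _ _ (fun x hx => hx.1.ne')
  · intro x hx
    rw [interior_Ioc] at hx
    rw [(fc_hasDerivAt q β c hx.1).deriv]
    have hxb : q / (c * β) < x ^ (-β) := by
      rw [← xs_rpow_neg_beta hq hβ hc]
      exact Real.rpow_lt_rpow_of_neg hx.1 hx.2 (neg_neg_of_pos hβ)
    have h2 : 0 < c * β * x ^ (-β) - q := by
      rw [sub_pos, ← div_lt_iff₀' (by positivity)]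
      exact hxb
    exact mul_pos (mul_pos (Real.rpow_pos_of_pos hx.1 _) (Real.exp_pos _)) h2

lemma fc_monotoneOn {q β c : ℝ} (hq : 0 < q) (hβ : 0 < β) (hc : 0 < c) :
    MonotoneOn (fc q β c) (Icc 0 (xs q β c)) := by
  intro x hx y hy hxy
  rcases eq_or_lt_of_le hx.1 with h0 | h0
  · rw [← h0, fc_zero hq]
    exact fc_nonneg q β c hy.1
  · rcases eq_or_lt_of_le hxy with rfl | hlt
    · exact le_rfl
    · exact (fc_strictMonoOn hq hβ hc ⟨h0, hx.2⟩ ⟨h0.trans hlt, hy.2⟩ hlt).le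

lemma fc_antitoneOn {q β c : ℝ} (hq : 0 < q) (hβ : 0 < β) (hc : 0 < c) :
    AntitoneOn (fc q β c) (Ici (xs q β c)) := by
  apply antitoneOn_of_deriv_nonpos (convex_Ici _)
  · exact fc_continuousOn _ _ _ (fun x hx => ((xs_pos hq hβ hc).trans_le hx).ne')
  · intro x hx
    rw [interior_Ici] at hx
    exact (fc_hasDerivAt q β c ((xs_pos hq hβ hc).trans hx)).differentiableAt.differentiableWithinAt
  · intro x hx
    rw [interior_Ici] at hx
    have hx0 : 0 < x := (xs_pos hq hβ hc).trans hx
    rw [(fc_hasDerivAt q β c hx0).deriv]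
    have hxb : x ^ (-β) < q / (c * β) := by
      rw [← xs_rpow_neg_beta hq hβ hc]
      exact Real.rpow_lt_rpow_of_neg (xs_pos hq hβ hc) hx (neg_neg_of_pos hβ)
    have h2 : c * β * x ^ (-β) - q ≤ 0 := by
      rw [sub_nonpos, ← le_div_iff₀' (by positivity)]
      exact hxb.le
    exact mul_nonpos_of_nonneg_of_nonpos
      (mul_nonneg (Real.rpow_nonneg hx0.le _) (Real.exp_pos _).le) h2

lemma fc_le_max {q β c : ℝ} (hq : 0 < q) (hβ : 0 < β) (hc : 0 < c) {x : ℝ} (hx : 0 ≤ x) :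
    fc q β c x ≤ fc q β c (xs q β c) := by
  rcases le_total x (xs q β c) with h | h
  · exact fc_monotoneOn hq hβ hc ⟨hx, h⟩ ⟨(xs_pos hq hβ hc).le, le_rfl⟩ h
  · exact fc_antitoneOn hq hβ hc (Set.mem_Ici.2 le_rfl) h h

lemma fc_xs_le {q β c : ℝ} (hq : 0 < q) (hβ : 0 < β) (hc : 0 < c) :
    fc q β c (xs q β c) ≤ (β / q) ^ (-(q / β)) * c ^ (-(q / β)) := by
  have h1 : (xs q β c) ^ (-q) = (c * (β / q)) ^ (-(q / β)) := by
    rw [xs, ← Real.rpow_mul (by positivity)]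
    have e2 : 1 / β * -q = -(q / β) := by field_simp
    rw [e2]
    congr 2
    ring
  have h2 : fc q β c (xs q β c) ≤ (xs q β c) ^ (-q) := by
    unfold fc
    nth_rewrite 2 [← mul_one ((xs q β c) ^ (-q))]
    apply mul_le_mul_of_nonneg_left _ (Real.rpow_nonneg (xs_pos hq hβ hc).le _)
    rw [Real.exp_le_one_iff]
    have : 0 ≤ c * (xs q β c) ^ (-β) :=
      mul_nonneg hc.le (Real.rpow_nonneg (xs_pos hq hβ hc).le _)
    linarith
  refine h2.trans ?_
  rw [h1, Real.mul_rpow hc.le (by positivity), mul_comm]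


lemma fc_measurable (q β c : ℝ) : Measurable (fc q β c) := by
  unfold fc
  fun_prop

lemma fc_exp_le_one {β c : ℝ} (hc : 0 ≤ c) {x : ℝ} (hx : 0 ≤ x) :
    Real.exp (-(c * x ^ (-β))) ≤ 1 := by
  rw [Real.exp_le_one_iff]
  have : 0 ≤ c * x ^ (-β) := mul_nonneg hc (Real.rpow_nonneg hx _)
  linarith

lemma fc_integrableOn {q β c : ℝ} (hq : 1 < q) (hβ : 0 < β) (hc : 0 < c) :
    IntegrableOn (fc q β c) (Ioi 0) := by
  have hq0 : 0 < q := lt_trans one_pos hq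
  have hmeas : Measurable (fc q β c) := fc_measurable q β c
  have h1 : IntegrableOn (fc q β c) (Ioc 0 1) := by
    apply Measure.integrableOn_of_bounded (M := fc q β c (xs q β c))
    · exact measure_Ioc_lt_top.ne
    · exact hmeas.aestronglyMeasurable
    · filter_upwards [ae_restrict_mem measurableSet_Ioc] with x hx
      rw [Real.norm_eq_abs, abs_of_nonneg (fc_nonneg q β c hx.1.le)]
      exact fc_le_max hq0 hβ hc hx.1.le
  have h2 : IntegrableOn (fc q β c) (Ioi 1) := by
    apply Integrable.mono' (g := fun x : ℝ => x ^ (-q))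
      (integrableOn_Ioi_rpow_of_lt (by linarith) one_pos)
    · exact hmeas.aestronglyMeasurable
    · filter_upwards [ae_restrict_mem measurableSet_Ioi] with x hx
      have hx0 : (0:ℝ) < x := lt_trans one_pos hx
      rw [Real.norm_eq_abs, abs_of_nonneg (fc_nonneg q β c hx0.le)]
      unfold fc
      nth_rewrite 2 [← mul_one (x ^ (-q))]
      exact mul_le_mul_of_nonneg_left (fc_exp_le_one hc.le hx0.le)
        (Real.rpow_nonneg hx0.le _)
  have h3 := h1.union h2
  rwa [Ioc_union_Ioi_eq_Ioi zero_le_one] at h3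

lemma fc_integral {q β c : ℝ} (hq : 1 < q) (hβ : 0 < β) (hc : 0 < c) :
    ∫ x in Ioi (0:ℝ), fc q β c x
      = c ^ (-((q - 1) / β)) * Real.Gamma ((q - 1) / β) / β := by
  set g := (q - 1) / β with hg
  have hgpos : 0 < g := div_pos (by linarith) hβ
  have key := integral_comp_rpow_Ioi
    (fun y : ℝ => β⁻¹ * (y ^ (g - 1) * Real.exp (-(c * y)))) (p := -β)
    (neg_ne_zero.mpr hβ.ne')
  have hL : ∀ x ∈ Ioi (0:ℝ),
      (|(-β)| * x ^ (-β - 1)) • (β⁻¹ * ((x ^ (-β)) ^ (g - 1) * Real.exp (-(c * x ^ (-β)))))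
        = fc q β c x := by
    intro x hx
    have hx0 : (0:ℝ) < x := hx
    have e1 : -β - 1 + -β * (g - 1) = -q := by
      have hbg : β * g = q - 1 := by rw [hg]; field_simp
      nlinarith [hbg]
    have e2 : x ^ (-β - 1) * x ^ (-β * (g - 1)) = x ^ (-q) := by
      rw [← Real.rpow_add hx0, e1]
    rw [smul_eq_mul, abs_neg, abs_of_pos hβ, ← Real.rpow_mul hx0.le]
    unfold fc
    calc β * x ^ (-β - 1) * (β⁻¹ * (x ^ (-β * (g - 1)) * Real.exp (-(c * x ^ (-β)))))
        = (β * β⁻¹) * (x ^ (-β - 1) * x ^ (-β * (g - 1)) * Real.exp (-(c * x ^ (-β)))) := by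
          ring
      _ = x ^ (-q) * Real.exp (-(c * x ^ (-β))) := by
          rw [mul_inv_cancel₀ hβ.ne', e2, one_mul]
  have hmain : ∫ x in Ioi (0:ℝ), fc q β c x
      = ∫ y in Ioi (0:ℝ), β⁻¹ * (y ^ (g - 1) * Real.exp (-(c * y))) := by
    rw [← key]
    exact setIntegral_congr_fun measurableSet_Ioi (fun x hx => (hL x hx).symm)
  have h3 : ∫ y in Ioi (0:ℝ), y ^ (g - 1) * Real.exp (-(c * y)) = c ^ (-g) * Real.Gamma g := by
    have h4 := integral_rpow_mul_exp_neg_mul_rpow one_pos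
      (show (-1:ℝ) < g - 1 by linarith) hc
    simp only [Real.rpow_one, neg_mul] at h4
    rw [h4]
    norm_num
  rw [hmain, MeasureTheory.integral_const_mul, h3]
  ring


section SumInt

variable {f : ℝ → ℝ} {xm M : ℝ}

lemma integral_Ioc_succ_le {d r : ℝ} (hint : IntegrableOn f (Ioc r (r + 1)))
    (h : ∀ x ∈ Ioc r (r + 1), f x ≤ d) : ∫ x in Ioc r (r + 1), f x ≤ d := by
  have h1 := setIntegral_mono_on hint
    (integrableOn_const measure_Ioc_lt_top.ne) measurableSet_Ioc h
  rwa [setIntegral_const, Real.volume_real_Ioc_of_le (by linarith), show r + 1 - r = 1 by ring,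
    one_smul] at h1

lemma le_integral_Ioc_succ {d r : ℝ} (hint : IntegrableOn f (Ioc r (r + 1)))
    (h : ∀ x ∈ Ioc r (r + 1), d ≤ f x) : d ≤ ∫ x in Ioc r (r + 1), f x := by
  have h1 := setIntegral_mono_on
    (integrableOn_const measure_Ioc_lt_top.ne) hint measurableSet_Ioc h
  rwa [setIntegral_const, Real.volume_real_Ioc_of_le (by linarith), show r + 1 - r = 1 by ring,
    one_smul] at h1

lemma sum_Ioc_integral (hint : IntegrableOn f (Ioi 0)) {r : ℝ} (hr : 0 ≤ r) (N : ℕ) :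
    ∑ m ∈ Finset.range N, ∫ x in Ioc (r + m) (r + m + 1), f x
      = ∫ x in Ioc r (r + N), f x := by
  have hI : ∀ i, i < N → IntervalIntegrable f volume (r + i) (r + (i + 1 : ℕ)) := by
    intro i _
    rw [intervalIntegrable_iff_integrableOn_Ioc_of_le (by push_cast; linarith)]
    apply hint.mono_set
    intro x hx
    exact lt_of_le_of_lt (by positivity) hx.1
  have key := intervalIntegral.sum_integral_adjacent_intervals
    (a := fun i : ℕ => r + i) (μ := volume) (f := f) hI
  have e0 : (fun i : ℕ => r + i) 0 = r := by norm_num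
  have eN : (fun i : ℕ => r + i) N = r + N := rfl
  rw [Nat.cast_zero, add_zero] at key
  rw [← intervalIntegral.integral_of_le (by have : (0:ℝ) ≤ (N:ℝ) := Nat.cast_nonneg N; linarith : r ≤ r + (N:ℝ)), ← key]
  apply Finset.sum_congr rfl
  intro m _
  rw [intervalIntegral.integral_of_le (by push_cast; linarith : r + (m:ℝ) ≤ r + ((m:ℕ)+1 : ℕ))]
  push_cast
  rw [add_assoc]


lemma integral_Ioi_split (hint : IntegrableOn f (Ioi 0)) {r s : ℝ} (h0r : 0 ≤ r) (hrs : r ≤ s) :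
    ∫ x in Ioi r, f x = (∫ x in Ioc r s, f x) + ∫ x in Ioi s, f x := by
  rw [← setIntegral_union (Ioc_disjoint_Ioi le_rfl) measurableSet_Ioi
      (hint.mono_set fun x hx => lt_of_le_of_lt h0r hx.1)
      (hint.mono_set fun x hx => lt_of_le_of_lt (h0r.trans hrs) hx),
    Ioc_union_Ioi_eq_Ioi hrs]

lemma sum_le_integral_add (hxm : 0 ≤ xm)
    (hmono : MonotoneOn f (Icc 0 xm)) (hanti : AntitoneOn f (Ici xm))
    (h0 : ∀ x : ℝ, 0 ≤ x → 0 ≤ f x) (hM : ∀ x : ℝ, 0 ≤ x → f x ≤ M)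
    (hint : IntegrableOn f (Ioi 0)) (hsum : Summable (fun m : ℕ => f ((m : ℝ) + 1))) :
    ∑' m : ℕ, f ((m : ℝ) + 1) ≤ (∫ x in Ioi 0, f x) + 2 * M := by
  set a := ⌊xm⌋₊ with ha
  have ha1 : (a : ℝ) ≤ xm := Nat.floor_le hxm
  have ha2 : xm < a + 1 := Nat.lt_floor_add_one xm
  have hM0 : 0 ≤ M := le_trans (h0 0 le_rfl) (hM 0 le_rfl)
  have hnonneg_ae : 0 ≤ᵐ[volume.restrict (Ioi (0:ℝ))] f := by
    filter_upwards [ae_restrict_mem measurableSet_Ioi] with x hx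
    exact h0 x (le_of_lt hx)
  have hIoc_int : ∀ r : ℝ, 0 ≤ r → IntegrableOn f (Ioc r (r + 1)) := by
    intro r hr
    apply hint.mono_set
    intro x hx
    exact lt_of_le_of_lt hr hx.1
  -- high part
  have hhigh : ∑' m : ℕ, f ((↑(m + (a + 1)) : ℝ) + 1) ≤ ∫ x in Ioi ((a : ℝ) + 1), f x := by
    apply Summable.tsum_le_of_sum_range_le ((summable_nat_add_iff (a + 1)).2 hsum)
    · intro n
      have step : ∀ m ∈ Finset.range n,
          f ((↑(m + (a + 1)) : ℝ) + 1) ≤ ∫ x in Ioc ((a:ℝ) + 1 + m) ((a:ℝ) + 1 + m + 1), f x := by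
        intro m _
        apply le_integral_Ioc_succ (hIoc_int _ (by positivity))
        intro x hx
        have hxge : xm ≤ (a:ℝ) + 1 + m := by
          have : (0:ℝ) ≤ (m:ℝ) := Nat.cast_nonneg m
          linarith
        have harg : ((↑(m + (a + 1)) : ℝ) + 1) = (a:ℝ) + 1 + m + 1 := by push_cast; ring
        rw [harg]
        exact hanti (le_trans hxge hx.1.le) (by simp only [mem_Ici]; linarith) hx.2
      calc ∑ m ∈ Finset.range n, f ((↑(m + (a + 1)) : ℝ) + 1)
          ≤ ∑ m ∈ Finset.range n, ∫ x in Ioc ((a:ℝ) + 1 + m) ((a:ℝ) + 1 + m + 1), f x :=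
            Finset.sum_le_sum step
        _ = ∫ x in Ioc ((a:ℝ) + 1) ((a:ℝ) + 1 + n), f x := sum_Ioc_integral hint (by positivity) n
        _ ≤ ∫ x in Ioi ((a:ℝ) + 1), f x := by
            apply setIntegral_mono_set (hint.mono_set ?_) ?_ ?_
            · intro x hx; exact lt_of_le_of_lt (by positivity : (0:ℝ) ≤ (a:ℝ) + 1) hx
            · filter_upwards [ae_restrict_mem measurableSet_Ioi] with x hx
              exact h0 x (le_of_lt (lt_of_le_of_lt (by positivity) hx))
            · exact HasSubset.Subset.eventuallyLE (fun x hx => hx.1)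
  -- low part and combination
  rw [← Summable.sum_add_tsum_nat_add (a + 1) hsum]
  have hIoiIoi : ∫ x in Ioi ((a:ℝ) + 1), f x ≤ ∫ x in Ioi ((a:ℝ)), f x := by
    apply setIntegral_mono_set (hint.mono_set ?_) ?_ ?_
    · intro x hx; exact lt_of_le_of_lt (by positivity : (0:ℝ) ≤ (a:ℝ)) hx
    · filter_upwards [ae_restrict_mem measurableSet_Ioi] with x hx
      exact h0 x (le_of_lt (lt_of_le_of_lt (by positivity) hx))
    · exact HasSubset.Subset.eventuallyLE (fun x hx => lt_of_le_of_lt (by linarith : (a:ℝ) ≤ (a:ℝ) + 1) hx)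
  have hnonnegIoc : ∀ u v : ℝ, 0 ≤ u → 0 ≤ ∫ x in Ioc u v, f x := fun u v hu =>
    setIntegral_nonneg measurableSet_Ioc (fun x hx => h0 x (hu.trans hx.1.le))
  rcases Nat.eq_zero_or_pos a with haz | hapos
  · -- a = 0 : only term f 1, bounded by M
    rw [haz] at hhigh ⊢
    simp only [Finset.range_one, Finset.sum_singleton, Nat.cast_zero, zero_add] at hhigh ⊢
    have h1M : f (0 + 1 : ℝ) ≤ M := hM _ (by norm_num)
    have hsplit := integral_Ioi_split hint (le_refl (0:ℝ)) zero_le_one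
    have hn := hnonnegIoc 0 1 le_rfl
    norm_num at hhigh hsplit h1M ⊢
    linarith
  · obtain ⟨b, hab⟩ : ∃ b, a = b + 1 := ⟨a - 1, (Nat.succ_pred_eq_of_pos hapos).symm⟩
    have habR : (a : ℝ) = (b : ℝ) + 1 := by rw [hab]; push_cast; ring
    -- finite sum: split off the last two terms
    rw [hab, Finset.sum_range_succ, Finset.sum_range_succ]
    have hlast1 : f ((b : ℝ) + 1) ≤ M := hM _ (by positivity)
    have hlast2 : f ((↑(b + 1) : ℝ) + 1) ≤ M := hM _ (by positivity)
    have hlow : ∑ m ∈ Finset.range b, f ((m : ℝ) + 1)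
        ≤ ∫ x in Ioc (1 : ℝ) (1 + b), f x := by
      rw [← sum_Ioc_integral hint zero_le_one b]
      apply Finset.sum_le_sum
      intro m hm
      have hmb : (m : ℝ) + 1 ≤ (b : ℝ) := by
        have := Finset.mem_range.1 hm
        exact_mod_cast Nat.succ_le_of_lt this
      apply le_integral_Ioc_succ (hIoc_int _ (by positivity))
      intro x hx
      have hx0 : (0:ℝ) ≤ x := le_trans (by positivity) hx.1.le
      apply hmono ⟨by positivity, by linarith⟩ ⟨hx0, by
        have := hx.2; linarith⟩
      linarith [hx.1]
    -- integral splits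
    rw [hab] at hhigh
    have hs1 := integral_Ioi_split hint (le_refl (0:ℝ)) zero_le_one
    have hs2 := integral_Ioi_split hint zero_le_one
      (le_add_of_nonneg_right (Nat.cast_nonneg b) : (1:ℝ) ≤ 1 + (b:ℝ))
    have hs3 := integral_Ioi_split hint (by positivity : (0:ℝ) ≤ 1 + (b:ℝ))
      (by push_cast; linarith : (1 : ℝ) + (b:ℝ) ≤ ((b + 1 : ℕ) : ℝ) + 1)
    have hn1 := hnonnegIoc 0 1 le_rfl
    have hn2 := hnonnegIoc (1 + (b:ℝ)) (((b + 1 : ℕ) : ℝ) + 1) (by positivity)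
    linarith


lemma integral_le_sum_add (hxm : 0 ≤ xm)
    (hmono : MonotoneOn f (Icc 0 xm)) (hanti : AntitoneOn f (Ici xm))
    (h0 : ∀ x : ℝ, 0 ≤ x → 0 ≤ f x) (hM : ∀ x : ℝ, 0 ≤ x → f x ≤ M)
    (hint : IntegrableOn f (Ioi 0)) (hsum : Summable (fun m : ℕ => f ((m : ℝ) + 1))) :
    (∫ x in Ioi 0, f x) ≤ (∑' m : ℕ, f ((m : ℝ) + 1)) + M := by
  set a := ⌊xm⌋₊ with ha
  have ha1 : (a : ℝ) ≤ xm := Nat.floor_le hxm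
  have ha2 : xm < a + 1 := Nat.lt_floor_add_one xm
  have hM0 : 0 ≤ M := le_trans (h0 0 le_rfl) (hM 0 le_rfl)
  have hIoc_int : ∀ r : ℝ, 0 ≤ r → IntegrableOn f (Ioc r (r + 1)) := by
    intro r hr
    apply hint.mono_set
    intro x hx
    exact lt_of_le_of_lt hr hx.1
  have hs1 := integral_Ioi_split hint (le_refl (0:ℝ)) (Nat.cast_nonneg a : (0:ℝ) ≤ (a:ℝ))
  have hs2 := integral_Ioi_split hint (Nat.cast_nonneg a : (0:ℝ) ≤ (a:ℝ))
    (by linarith : (a:ℝ) ≤ (a:ℝ) + 1)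
  have hmid : ∫ x in Ioc (a:ℝ) ((a:ℝ) + 1), f x ≤ M :=
    integral_Ioc_succ_le (hIoc_int _ (Nat.cast_nonneg a))
      (fun x hx => hM x (le_trans (Nat.cast_nonneg a) hx.1.le))
  have hlow : ∫ x in Ioc (0:ℝ) (a:ℝ), f x ≤ ∑ m ∈ Finset.range a, f ((m:ℝ) + 1) := by
    have hadj := sum_Ioc_integral hint (le_refl (0:ℝ)) a
    simp only [zero_add] at hadj
    rw [← hadj]
    apply Finset.sum_le_sum
    intro m hm
    have hma : (m : ℝ) + 1 ≤ (a : ℝ) := by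
      exact_mod_cast Nat.succ_le_of_lt (Finset.mem_range.1 hm)
    apply integral_Ioc_succ_le (hIoc_int _ (Nat.cast_nonneg m))
    intro x hx
    exact hmono ⟨le_trans (Nat.cast_nonneg m) hx.1.le, by linarith [hx.2]⟩
      ⟨by positivity, by linarith⟩ hx.2
  have hshift : Summable (fun m : ℕ => f ((↑(m + a) : ℝ) + 1)) :=
    (summable_nat_add_iff a).2 hsum
  have hhigh : ∫ x in Ioi ((a:ℝ) + 1), f x ≤ ∑' m : ℕ, f ((↑(m + a) : ℝ) + 1) := by
    have htend : Tendsto (fun N : ℕ => ∫ x in ((a:ℝ) + 1)..((a:ℝ) + 1 + N), f x) atTop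
        (nhds (∫ x in Ioi ((a:ℝ) + 1), f x)) := by
      apply MeasureTheory.intervalIntegral_tendsto_integral_Ioi ((a:ℝ) + 1)
        (hint.mono_set (fun x hx => lt_of_le_of_lt (by positivity : (0:ℝ) ≤ (a:ℝ) + 1) hx))
      exact tendsto_atTop_add_const_left _ _ tendsto_natCast_atTop_atTop
    apply le_of_tendsto htend
    filter_upwards with N
    rw [intervalIntegral.integral_of_le
        (by linarith [Nat.cast_nonneg (α := ℝ) N] : (a:ℝ) + 1 ≤ (a:ℝ) + 1 + N),
      ← sum_Ioc_integral hint (by positivity : (0:ℝ) ≤ (a:ℝ) + 1) N]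
    calc ∑ m ∈ Finset.range N, ∫ x in Ioc ((a:ℝ) + 1 + m) ((a:ℝ) + 1 + m + 1), f x
        ≤ ∑ m ∈ Finset.range N, f ((↑(m + a) : ℝ) + 1) := by
          apply Finset.sum_le_sum
          intro m _
          have harg : ((↑(m + a) : ℝ) + 1) = (a:ℝ) + 1 + m := by push_cast; ring
          rw [harg]
          apply integral_Ioc_succ_le (hIoc_int _ (by positivity))
          intro x hx
          apply hanti (by simp only [mem_Ici]
                          have : (0:ℝ) ≤ (m:ℝ) := Nat.cast_nonneg m
                          linarith)
            (by simp only [mem_Ici]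
                have : (0:ℝ) ≤ (m:ℝ) := Nat.cast_nonneg m
                linarith [hx.1.le]) hx.1.le
      _ ≤ ∑' m : ℕ, f ((↑(m + a) : ℝ) + 1) :=
          Summable.sum_le_tsum _ (fun i _ => h0 _ (by positivity)) hshift
  have hkey := Summable.sum_add_tsum_nat_add a hsum
  have hfin : 0 ≤ ∑ m ∈ Finset.range a, f ((m:ℝ) + 1) :=
    Finset.sum_nonneg (fun m _ => h0 _ (by positivity))
  linarith [hkey]

end SumInt


lemma summable_shift_rpow {p : ℝ} (hp : 1 < p) :
    Summable (fun m : ℕ => ((m : ℝ) + 1) ^ (-p)) := by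
  have h : Summable (fun n : ℕ => (n : ℝ) ^ (-p)) :=
    Real.summable_nat_rpow.2 (by linarith)
  have h2 := (summable_nat_add_iff 1).2 h
  exact h2.congr fun n => by push_cast; norm_num

lemma fc_summable {q β c : ℝ} (hq : 1 < q) (hβ : 0 < β) (hc : 0 ≤ c) :
    Summable (fun m : ℕ => fc q β c ((m : ℝ) + 1)) := by
  apply Summable.of_nonneg_of_le (fun m => fc_nonneg q β c (by positivity))
    (fun m => ?_) (summable_shift_rpow hq)
  unfold fc
  nth_rewrite 2 [← mul_one (((m:ℝ) + 1) ^ (-q))]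
  exact mul_le_mul_of_nonneg_left (fc_exp_le_one hc (by positivity))
    (Real.rpow_nonneg (by positivity) _)

lemma tendsto_fc_sum {q β b : ℝ} (hq : 1 < q) (hβ : 0 < β) (hb : 0 < b) :
    Tendsto (fun t : ℝ => t ^ ((q - 1) / β) * ∑' m : ℕ, fc q β (b * t) ((m : ℝ) + 1)) atTop
      (nhds (b ^ (-((q - 1) / β)) * Real.Gamma ((q - 1) / β) / β)) := by
  set g := (q - 1) / β with hg
  have hgpos : 0 < g := div_pos (by linarith) hβ
  have hq0 : 0 < q := by linarith
  set C : ℝ := (β / q) ^ (-(q / β)) with hC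
  have hCpos : 0 < C := Real.rpow_pos_of_pos (by positivity) _
  set L : ℝ := b ^ (-g) * Real.Gamma g / β with hL
  have key : ∀ t : ℝ, 1 ≤ t →
      L - 2 * C * b ^ (-(q/β)) * t ^ (g - q/β)
        ≤ t ^ g * ∑' m : ℕ, fc q β (b * t) ((m : ℝ) + 1) ∧
      t ^ g * ∑' m : ℕ, fc q β (b * t) ((m : ℝ) + 1)
        ≤ L + 2 * C * b ^ (-(q/β)) * t ^ (g - q/β) := by
    intro t ht
    have ht0 : (0:ℝ) < t := lt_of_lt_of_le one_pos ht
    have hbt : 0 < b * t := by positivity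
    have hint := fc_integrableOn hq hβ hbt
    have hIeq := fc_integral hq hβ hbt
    have hsum := fc_summable hq hβ hbt.le
    have h1 := sum_le_integral_add (xs_pos hq0 hβ hbt).le (fc_monotoneOn hq0 hβ hbt)
      (fc_antitoneOn hq0 hβ hbt) (fun x hx => fc_nonneg q β (b*t) hx)
      (fun x hx => fc_le_max hq0 hβ hbt hx) hint hsum
    have h2 := integral_le_sum_add (xs_pos hq0 hβ hbt).le (fc_monotoneOn hq0 hβ hbt)
      (fc_antitoneOn hq0 hβ hbt) (fun x hx => fc_nonneg q β (b*t) hx)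
      (fun x hx => fc_le_max hq0 hβ hbt hx) hint hsum
    have hxsle := fc_xs_le hq0 hβ hbt
    have htg : (0:ℝ) ≤ t ^ g := Real.rpow_nonneg ht0.le _
    have htt : t ^ g * t ^ (-g) = 1 := by
      rw [← Real.rpow_add ht0]; norm_num
    have hIg : t ^ g * ∫ x in Ioi 0, fc q β (b * t) x = L := by
      rw [hIeq, hL]
      calc t ^ g * ((b * t) ^ (-g) * Real.Gamma g / β)
          = (t ^ g * t ^ (-g)) * (b ^ (-g) * Real.Gamma g / β) := by
            rw [Real.mul_rpow hb.le ht0.le]; ring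
        _ = b ^ (-g) * Real.Gamma g / β := by rw [htt, one_mul]
    have hE : t ^ g * fc q β (b * t) (xs q β (b * t))
        ≤ C * b ^ (-(q/β)) * t ^ (g - q/β) := by
      calc t ^ g * fc q β (b * t) (xs q β (b * t))
          ≤ t ^ g * (C * (b * t) ^ (-(q/β))) := mul_le_mul_of_nonneg_left hxsle htg
        _ = C * b ^ (-(q/β)) * t ^ (g - q/β) := by
            rw [Real.mul_rpow hb.le ht0.le, show g - q/β = g + -(q/β) by ring,
              Real.rpow_add ht0]
            ring
    have hfcnn : 0 ≤ fc q β (b * t) (xs q β (b * t)) :=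
      fc_nonneg q β (b*t) (xs_pos hq0 hβ hbt).le
    constructor
    · have h2' := mul_le_mul_of_nonneg_left h2 htg
      rw [mul_add] at h2'
      have := mul_le_mul_of_nonneg_left hfcnn htg
      nlinarith [hE, hIg, h2', mul_nonneg htg hfcnn]
    · have h1' := mul_le_mul_of_nonneg_left h1 htg
      rw [mul_add] at h1'
      have h1'' : t ^ g * ∑' m : ℕ, fc q β (b * t) ((m : ℝ) + 1)
          ≤ L + t ^ g * (2 * fc q β (b * t) (xs q β (b * t))) := by
        rw [← hIg]; linarith
      nlinarith [hE, mul_nonneg htg hfcnn]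
  have herr : Tendsto (fun t : ℝ => 2 * C * b ^ (-(q/β)) * t ^ (g - q/β)) atTop (nhds 0) := by
    have hexp : g - q/β = -(1/β) := by rw [hg]; field_simp; ring
    rw [hexp]
    simpa using (tendsto_rpow_neg_atTop (by positivity : (0:ℝ) < 1/β)).const_mul
      (2 * C * b ^ (-(q/β)))
  have hlo : Tendsto (fun t : ℝ => L - 2 * C * b ^ (-(q/β)) * t ^ (g - q/β)) atTop (nhds L) := by
    have := tendsto_const_nhds (α := ℝ) (x := L) (f := atTop (α := ℝ))
    simpa using this.sub herr
  have hhi : Tendsto (fun t : ℝ => L + 2 * C * b ^ (-(q/β)) * t ^ (g - q/β)) atTop (nhds L) := by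
    have := tendsto_const_nhds (α := ℝ) (x := L) (f := atTop (α := ℝ))
    simpa using this.add herr
  apply tendsto_of_tendsto_of_tendsto_of_le_of_le' hlo hhi
  · filter_upwards [eventually_ge_atTop (1:ℝ)] with t ht
    exact (key t ht).1
  · filter_upwards [eventually_ge_atTop (1:ℝ)] with t ht
    exact (key t ht).2

end SeedbankAux

open SeedbankAux in
/-- Fat-tailed wake-up times from a coloured seed-bank (Remark 2.14, eqs. (2.26)–(2.29)):
if `K m ~ A m^{-α}` and `e m ~ B m^{-β}` with `α ≤ 1 < α + β`, and `γ = (α+β-1)/β`, then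
`t^γ * Σ_{m≥1} K_m e_m exp(-e_m t) → (A/β) B^{1-γ} Γ(γ)` as `t → ∞`. -/
theorem seedbank_fat_tail
    (K e : ℕ → ℝ) (A B α β : ℝ) (hA : 0 < A) (hB : 0 < B)
    (hα : α ≤ 1) (hαβ : 1 < α + β)
    (hKpos : ∀ m : ℕ, 1 ≤ m → 0 < K m) (hepos : ∀ m : ℕ, 1 ≤ m → 0 < e m)
    (hKasym : Tendsto (fun m : ℕ => K m / (A * (m : ℝ) ^ (-α))) atTop (nhds 1))
    (heasym : Tendsto (fun m : ℕ => e m / (B * (m : ℝ) ^ (-β))) atTop (nhds 1))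
    (γ : ℝ) (hγ : γ = (α + β - 1) / β) :
    Tendsto
      (fun t : ℝ => t ^ γ * ∑' m : ℕ, K (m + 1) * e (m + 1) * Real.exp (-(e (m + 1) * t)))
      atTop (nhds ((A / β) * B ^ (1 - γ) * Real.Gamma γ)) := by
  have hβpos : 0 < β := by linarith
  set p : ℝ := α + β with hp
  have hp1 : 1 < p := hαβ
  have hγ' : γ = (p - 1) / β := hγ
  have hγpos : 0 < γ := by rw [hγ']; exact div_pos (by linarith) hβpos
  have hΓpos : 0 < Real.Gamma γ := Real.Gamma_pos_of_pos hγpos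
  set L : ℝ := A / β * B ^ (1 - γ) * Real.Gamma γ with hL
  have hBγ : B ^ (1 - γ) = B * B ^ (-γ) := by
    rw [show (1:ℝ) - γ = 1 + -γ by ring, Real.rpow_add hB, Real.rpow_one]
  have hLpos : 0 < L := by
    rw [hL]
    have := Real.rpow_pos_of_pos hB (1 - γ)
    positivity
  -- main sandwich construction for a fixed ε
  have main : ∀ ε : ℝ, 0 < ε → ε < 1 → ∃ U Lo : ℝ → ℝ,
      Tendsto U atTop
        (nhds ((1+ε) * (1+ε) * (A*B) * (((1-ε)*B) ^ (-γ) * Real.Gamma γ / β))) ∧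
      Tendsto Lo atTop
        (nhds ((1-ε) * (1-ε) * (A*B) * (((1+ε)*B) ^ (-γ) * Real.Gamma γ / β))) ∧
      (∀ᶠ t in atTop,
        Lo t ≤ t ^ γ * ∑' m : ℕ, K (m + 1) * e (m + 1) * Real.exp (-(e (m + 1) * t)) ∧
        t ^ γ * ∑' m : ℕ, K (m + 1) * e (m + 1) * Real.exp (-(e (m + 1) * t)) ≤ U t) := by
    intro ε hε0 hε1
    -- cutoff from the asymptotics
    have hKup := hKasym.eventually_lt_const (by linarith : (1:ℝ) < 1 + ε)
    have hKlo := hKasym.eventually_const_lt (by linarith : 1 - ε < (1:ℝ))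
    have heup := heasym.eventually_lt_const (by linarith : (1:ℝ) < 1 + ε)
    have helo := heasym.eventually_const_lt (by linarith : 1 - ε < (1:ℝ))
    obtain ⟨N0, hN0⟩ := eventually_atTop.1
      (((hKup.and hKlo).and (heup.and helo)).and (eventually_ge_atTop 1))
    have hbounds : ∀ n : ℕ, N0 ≤ n →
        K n ≤ (1+ε) * A * (n:ℝ) ^ (-α) ∧ (1-ε) * A * (n:ℝ) ^ (-α) ≤ K n ∧
        e n ≤ (1+ε) * B * (n:ℝ) ^ (-β) ∧ (1-ε) * B * (n:ℝ) ^ (-β) ≤ e n := by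
      intro n hn
      obtain ⟨⟨⟨hK1, hK2⟩, ⟨hE1, hE2⟩⟩, hn1⟩ := hN0 n hn
      have hnpos : (0:ℝ) < (n:ℝ) := by exact_mod_cast hn1
      have hApos : 0 < A * (n:ℝ) ^ (-α) := mul_pos hA (Real.rpow_pos_of_pos hnpos _)
      have hBpos : 0 < B * (n:ℝ) ^ (-β) := mul_pos hB (Real.rpow_pos_of_pos hnpos _)
      refine ⟨?_, ?_, ?_, ?_⟩
      · have := (div_lt_iff₀ hApos).1 hK1; linarith [this]
      · have := (lt_div_iff₀ hApos).1 hK2; linarith [this]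
      · have := (div_lt_iff₀ hBpos).1 hE1; linarith [this]
      · have := (lt_div_iff₀ hBpos).1 hE2; linarith [this]
    have hc1 : (0:ℝ) < (1-ε) * B := mul_pos (by linarith) hB
    have hc2 : (0:ℝ) < (1+ε) * B := mul_pos (by linarith) hB
    have hTnn : ∀ (m : ℕ) (t : ℝ), 0 ≤ t →
        0 ≤ K (m+1) * e (m+1) * Real.exp (-(e (m+1) * t)) := by
      intro m t ht
      have hK := hKpos (m+1) (by omega)
      have hE := hepos (m+1) (by omega)
      positivity
    have hfcS : ∀ c : ℝ, 0 ≤ c → Summable (fun m : ℕ => fc p β c ((m:ℝ)+1)) :=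
      fun c hc => fc_summable hp1 hβpos hc
    have hcast : ∀ m : ℕ, ((m + N0 + 1 : ℕ) : ℝ) = ((m + N0 : ℕ) : ℝ) + 1 := by
      intro m; push_cast; ring
    have hterm_up : ∀ (m : ℕ) (t : ℝ), 0 ≤ t →
        K (m + N0 + 1) * e (m + N0 + 1) * Real.exp (-(e (m + N0 + 1) * t))
          ≤ (1+ε) * (1+ε) * (A*B) * fc p β ((1-ε)*B*t) ((↑(m + N0) : ℝ) + 1) := by
      intro m t ht
      set n := m + N0 + 1 with hn
      have hnN : N0 ≤ n := by omega
      have hn1 : 1 ≤ n := by omega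
      obtain ⟨hKu, hKl, hEu, hEl⟩ := hbounds n hnN
      have hnpos : (0:ℝ) < (n:ℝ) := by exact_mod_cast hn1
      have hKn := hKpos n hn1
      have hEn := hepos n hn1
      have hexp : Real.exp (-(e n * t)) ≤ Real.exp (-((1-ε)*B*t * ((n:ℝ)) ^ (-β))) := by
        apply Real.exp_le_exp.2
        have h9 : (1-ε)*B*((n:ℝ))^(-β) * t ≤ e n * t := mul_le_mul_of_nonneg_right hEl ht
        nlinarith [h9]
      have hrw : ((n:ℝ)) ^ (-α) * ((n:ℝ)) ^ (-β) = ((n:ℝ)) ^ (-p) := by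
        rw [← Real.rpow_add hnpos, hp]; ring_nf
      have hfc : fc p β ((1-ε)*B*t) ((↑(m+N0):ℝ)+1)
          = ((n:ℝ))^(-p) * Real.exp (-((1-ε)*B*t * ((n:ℝ))^(-β))) := by
        simp only [fc, hn, hcast m]
      rw [hfc]
      have hrpα : (0:ℝ) ≤ (n:ℝ) ^ (-α) := Real.rpow_nonneg hnpos.le _
      have hrpβ : (0:ℝ) ≤ (n:ℝ) ^ (-β) := Real.rpow_nonneg hnpos.le _
      calc K n * e n * Real.exp (-(e n * t))
          ≤ ((1+ε)*A*(n:ℝ)^(-α)) * ((1+ε)*B*(n:ℝ)^(-β))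
              * Real.exp (-((1-ε)*B*t * ((n:ℝ))^(-β))) := by
            apply mul_le_mul (mul_le_mul hKu hEu hEn.le (by positivity)) hexp
              (Real.exp_pos _).le (by positivity)
        _ = (1+ε)*(1+ε)*(A*B)
              * (((n:ℝ))^(-p) * Real.exp (-((1-ε)*B*t * ((n:ℝ))^(-β)))) := by
            rw [← hrw]; ring
    have hterm_lo : ∀ (m : ℕ) (t : ℝ), 0 ≤ t →
        (1-ε) * (1-ε) * (A*B) * fc p β ((1+ε)*B*t) ((↑(m + N0) : ℝ) + 1)
          ≤ K (m + N0 + 1) * e (m + N0 + 1) * Real.exp (-(e (m + N0 + 1) * t)) := by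
      intro m t ht
      set n := m + N0 + 1 with hn
      have hnN : N0 ≤ n := by omega
      have hn1 : 1 ≤ n := by omega
      obtain ⟨hKu, hKl, hEu, hEl⟩ := hbounds n hnN
      have hnpos : (0:ℝ) < (n:ℝ) := by exact_mod_cast hn1
      have hKn := hKpos n hn1
      have hEn := hepos n hn1
      have hexp : Real.exp (-((1+ε)*B*t * ((n:ℝ)) ^ (-β))) ≤ Real.exp (-(e n * t)) := by
        apply Real.exp_le_exp.2
        have h9 : e n * t ≤ (1+ε)*B*((n:ℝ))^(-β) * t := mul_le_mul_of_nonneg_right hEu ht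
        nlinarith [h9]
      have hrw : ((n:ℝ)) ^ (-α) * ((n:ℝ)) ^ (-β) = ((n:ℝ)) ^ (-p) := by
        rw [← Real.rpow_add hnpos, hp]; ring_nf
      have hfc : fc p β ((1+ε)*B*t) ((↑(m+N0):ℝ)+1)
          = ((n:ℝ))^(-p) * Real.exp (-((1+ε)*B*t * ((n:ℝ))^(-β))) := by
        simp only [fc, hn, hcast m]
      rw [hfc]
      have hrpα : (0:ℝ) ≤ (n:ℝ) ^ (-α) := Real.rpow_nonneg hnpos.le _
      have hrpβ : (0:ℝ) ≤ (n:ℝ) ^ (-β) := Real.rpow_nonneg hnpos.le _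
      calc (1-ε)*(1-ε)*(A*B)
              * (((n:ℝ))^(-p) * Real.exp (-((1+ε)*B*t * ((n:ℝ))^(-β))))
          = ((1-ε)*A*(n:ℝ)^(-α)) * ((1-ε)*B*(n:ℝ)^(-β))
              * Real.exp (-((1+ε)*B*t * ((n:ℝ))^(-β))) := by
            rw [← hrw]; ring
        _ ≤ K n * e n * Real.exp (-(e n * t)) := by
            apply mul_le_mul (mul_le_mul hKl hEl (by positivity) hKn.le) hexp
              (Real.exp_pos _).le (by positivity)
    have hTsum : ∀ t : ℝ, 0 ≤ t →
        Summable (fun m : ℕ => K (m+1) * e (m+1) * Real.exp (-(e (m+1) * t))) := by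
      intro t ht
      apply (summable_nat_add_iff N0).1
      apply Summable.of_nonneg_of_le (fun m => hTnn (m+N0) t ht) (fun m => hterm_up m t ht)
      exact ((summable_nat_add_iff
        (f := fun m : ℕ => fc p β ((1-ε)*B*t) ((m:ℝ)+1)) N0).2
        (hfcS _ (by positivity))).mul_left _
    refine ⟨fun t => (∑ m ∈ Finset.range N0,
          K (m+1) * e (m+1) * (t ^ γ * Real.exp (-(e (m+1)) * t)))
        + (1+ε)*(1+ε)*(A*B) * (t ^ γ * ∑' m : ℕ, fc p β ((1-ε)*B*t) ((m:ℝ)+1)),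
      fun t => (1-ε)*(1-ε)*(A*B) * ((t ^ γ * ∑' m : ℕ, fc p β ((1+ε)*B*t) ((m:ℝ)+1))
        - ∑ m ∈ Finset.range N0,
            ((m:ℝ)+1)^(-p) * (t ^ γ * Real.exp (-((1+ε)*B*((m:ℝ)+1)^(-β)) * t))),
      ?_, ?_, ?_⟩
    · -- Tendsto U
      have hfin0 : Tendsto (fun t : ℝ => ∑ m ∈ Finset.range N0,
          K (m+1) * e (m+1) * (t ^ γ * Real.exp (-(e (m+1)) * t))) atTop (nhds 0) := by
        have h' : ∀ m ∈ Finset.range N0, Tendsto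
            (fun t : ℝ => K (m+1) * e (m+1) * (t ^ γ * Real.exp (-(e (m+1)) * t)))
            atTop (nhds 0) := by
          intro m _
          simpa using (tendsto_rpow_mul_exp_neg_mul_atTop_nhds_zero γ (e (m+1))
            (hepos (m+1) (by omega))).const_mul (K (m+1) * e (m+1))
        simpa using tendsto_finset_sum _ h'
      have h2 := (tendsto_fc_sum hp1 hβpos hc1).const_mul ((1+ε)*(1+ε)*(A*B))
      rw [show (p - 1)/β = γ from hγ'.symm] at h2
      simpa using hfin0.add h2
    · -- Tendsto Lo
      have hfin1 : Tendsto (fun t : ℝ => ∑ m ∈ Finset.range N0,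
          ((m:ℝ)+1)^(-p) * (t ^ γ * Real.exp (-((1+ε)*B*((m:ℝ)+1)^(-β)) * t)))
          atTop (nhds 0) := by
        have h' : ∀ m ∈ Finset.range N0, Tendsto
            (fun t : ℝ => ((m:ℝ)+1)^(-p) * (t ^ γ * Real.exp (-((1+ε)*B*((m:ℝ)+1)^(-β)) * t)))
            atTop (nhds 0) := by
          intro m _
          simpa using (tendsto_rpow_mul_exp_neg_mul_atTop_nhds_zero γ
            ((1+ε)*B*((m:ℝ)+1)^(-β)) (by positivity)).const_mul (((m:ℝ)+1)^(-p))
        simpa using tendsto_finset_sum _ h'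
      have h2 := (tendsto_fc_sum hp1 hβpos hc2)
      rw [show (p - 1)/β = γ from hγ'.symm] at h2
      simpa using (h2.sub hfin1).const_mul ((1-ε)*(1-ε)*(A*B))
    · -- eventual inequalities
      filter_upwards [eventually_ge_atTop (0:ℝ)] with t ht
      have htγ : (0:ℝ) ≤ t ^ γ := Real.rpow_nonneg ht _
      have hsplitT := Summable.sum_add_tsum_nat_add N0 (hTsum t ht)
      have hS1 : Summable (fun m : ℕ =>
          K (m+N0+1) * e (m+N0+1) * Real.exp (-(e (m+N0+1) * t))) :=
        (summable_nat_add_iff (f := fun m : ℕ =>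
          K (m+1) * e (m+1) * Real.exp (-(e (m+1) * t))) N0).2 (hTsum t ht)
      have hSfc1 : Summable (fun m : ℕ => fc p β ((1-ε)*B*t) ((↑(m+N0):ℝ)+1)) :=
        (summable_nat_add_iff (f := fun m : ℕ => fc p β ((1-ε)*B*t) ((m:ℝ)+1)) N0).2
          (hfcS _ (by positivity))
      have hSfc2 : Summable (fun m : ℕ => fc p β ((1+ε)*B*t) ((↑(m+N0):ℝ)+1)) :=
        (summable_nat_add_iff (f := fun m : ℕ => fc p β ((1+ε)*B*t) ((m:ℝ)+1)) N0).2
          (hfcS _ (by positivity))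
      constructor
      · -- lower bound
        have hsplitfc := Summable.sum_add_tsum_nat_add N0 (hfcS ((1+ε)*B*t) (by positivity))
        have h7 : (1-ε)*(1-ε)*(A*B) * ∑' m : ℕ, fc p β ((1+ε)*B*t) ((↑(m+N0):ℝ)+1)
            ≤ ∑' m : ℕ, K (m+N0+1) * e (m+N0+1) * Real.exp (-(e (m+N0+1) * t)) := by
          rw [← tsum_mul_left]
          exact Summable.tsum_le_tsum (fun m => hterm_lo m t ht) (hSfc2.mul_left _) hS1
        have hfin_eq : t ^ γ * ∑ m ∈ Finset.range N0, fc p β ((1+ε)*B*t) ((m:ℝ)+1)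
            = ∑ m ∈ Finset.range N0,
              ((m:ℝ)+1)^(-p) * (t ^ γ * Real.exp (-((1+ε)*B*((m:ℝ)+1)^(-β)) * t)) := by
          rw [Finset.mul_sum]
          apply Finset.sum_congr rfl
          intro m _
          simp only [fc]
          rw [show -((1+ε)*B*t * ((m:ℝ)+1)^(-β)) = -((1+ε)*B*((m:ℝ)+1)^(-β)) * t by ring]
          ring
        have hLoeq : (1-ε)*(1-ε)*(A*B) * ((t ^ γ * ∑' m : ℕ, fc p β ((1+ε)*B*t) ((m:ℝ)+1))
            - ∑ m ∈ Finset.range N0,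
                ((m:ℝ)+1)^(-p) * (t ^ γ * Real.exp (-((1+ε)*B*((m:ℝ)+1)^(-β)) * t)))
            = t ^ γ * ((1-ε)*(1-ε)*(A*B)
                * ∑' m : ℕ, fc p β ((1+ε)*B*t) ((↑(m+N0):ℝ)+1)) := by
          rw [← hfin_eq, ← hsplitfc]
          ring
        rw [hLoeq]
        have hchain1 : t ^ γ * ((1-ε)*(1-ε)*(A*B)
              * ∑' m : ℕ, fc p β ((1+ε)*B*t) ((↑(m+N0):ℝ)+1))
            ≤ t ^ γ * ∑' m : ℕ, K (m+N0+1) * e (m+N0+1) * Real.exp (-(e (m+N0+1) * t)) :=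
          mul_le_mul_of_nonneg_left h7 htγ
        have hfinT_nn : 0 ≤ ∑ m ∈ Finset.range N0,
            K (m+1) * e (m+1) * Real.exp (-(e (m+1) * t)) :=
          Finset.sum_nonneg (fun m _ => hTnn m t ht)
        have hchain2 : t ^ γ * ∑' m : ℕ, K (m+N0+1) * e (m+N0+1) * Real.exp (-(e (m+N0+1) * t))
            ≤ t ^ γ * ∑' m : ℕ, K (m+1) * e (m+1) * Real.exp (-(e (m+1) * t)) := by
          apply mul_le_mul_of_nonneg_left _ htγ
          linarith [hsplitT]
        linarith
      · -- upper bound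
        have hsplitfc := Summable.sum_add_tsum_nat_add N0 (hfcS ((1-ε)*B*t) (by positivity))
        have h5 : ∑' m : ℕ, K (m+N0+1) * e (m+N0+1) * Real.exp (-(e (m+N0+1) * t))
            ≤ (1+ε)*(1+ε)*(A*B) * ∑' m : ℕ, fc p β ((1-ε)*B*t) ((↑(m+N0):ℝ)+1) := by
          rw [← tsum_mul_left]
          exact Summable.tsum_le_tsum (fun m => hterm_up m t ht) hS1 (hSfc1.mul_left _)
        have h6 : ∑' m : ℕ, fc p β ((1-ε)*B*t) ((↑(m+N0):ℝ)+1)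
            ≤ ∑' m : ℕ, fc p β ((1-ε)*B*t) ((m:ℝ)+1) := by
          have hfin_nn : 0 ≤ ∑ m ∈ Finset.range N0, fc p β ((1-ε)*B*t) ((m:ℝ)+1) :=
            Finset.sum_nonneg (fun m _ => fc_nonneg _ _ _ (by positivity))
          linarith [hsplitfc]
        rw [← hsplitT, mul_add]
        have hfirst : t ^ γ * ∑ m ∈ Finset.range N0,
              K (m+1) * e (m+1) * Real.exp (-(e (m+1) * t))
            = ∑ m ∈ Finset.range N0,
              K (m+1) * e (m+1) * (t ^ γ * Real.exp (-(e (m+1)) * t)) := by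
          rw [Finset.mul_sum]
          apply Finset.sum_congr rfl
          intro m _
          rw [show -(e (m+1) * t) = -(e (m+1)) * t by ring]
          ring
        rw [hfirst]
        apply add_le_add_right
        calc t ^ γ * ∑' m : ℕ, K (m+N0+1) * e (m+N0+1) * Real.exp (-(e (m+N0+1) * t))
            ≤ t ^ γ * ((1+ε)*(1+ε)*(A*B) * ∑' m : ℕ, fc p β ((1-ε)*B*t) ((m:ℝ)+1)) := by
              apply mul_le_mul_of_nonneg_left _ htγ
              calc ∑' m : ℕ, K (m+N0+1) * e (m+N0+1) * Real.exp (-(e (m+N0+1) * t))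
                  ≤ (1+ε)*(1+ε)*(A*B) * ∑' m : ℕ, fc p β ((1-ε)*B*t) ((↑(m+N0):ℝ)+1) := h5
                _ ≤ (1+ε)*(1+ε)*(A*B) * ∑' m : ℕ, fc p β ((1-ε)*B*t) ((m:ℝ)+1) :=
                    mul_le_mul_of_nonneg_left h6 (by positivity)
          _ = (1+ε)*(1+ε)*(A*B) * (t ^ γ * ∑' m : ℕ, fc p β ((1-ε)*B*t) ((m:ℝ)+1)) := by
              ring

  -- conclude via order characterisation of the limit
  rw [tendsto_order]
  constructor
  · intro v hv
    set φ : ℝ → ℝ :=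
      fun ε => (1-ε) * (1-ε) * (A*B) * (((1+ε)*B) ^ (-γ) * Real.Gamma γ / β) with hφ
    have hcont : ContinuousAt φ 0 := by
      apply ContinuousAt.mul
      · fun_prop
      · apply ContinuousAt.div_const
        apply ContinuousAt.mul _ continuousAt_const
        have hin : ContinuousAt (fun ε : ℝ => (1+ε)*B) 0 := by fun_prop
        have h1 : ContinuousAt (fun x : ℝ => x ^ (-γ)) ((fun ε : ℝ => (1+ε)*B) 0) :=
          Real.continuousAt_rpow_const _ _ (Or.inl (by norm_num; exact hB.ne'))
        exact ContinuousAt.comp (g := fun x : ℝ => x ^ (-γ))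
          (f := fun ε : ℝ => (1+ε)*B) h1 hin
    have hval : φ 0 = L := by
      rw [hφ]
      norm_num
      rw [hL, hBγ]
      ring
    have hφtend : Tendsto φ (nhds 0) (nhds L) := hval ▸ hcont
    have h2 : ∀ᶠ ε in nhdsWithin 0 (Set.Ioi (0:ℝ)), v < φ ε :=
      (hφtend.eventually_const_lt hv).filter_mono nhdsWithin_le_nhds
    have h3 : ∀ᶠ ε in nhdsWithin 0 (Set.Ioi (0:ℝ)), ε < 1 :=
      (eventually_lt_nhds zero_lt_one).filter_mono nhdsWithin_le_nhds
    have h4 : ∀ᶠ ε in nhdsWithin 0 (Set.Ioi (0:ℝ)), 0 < ε := eventually_mem_nhdsWithin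
    obtain ⟨ε, hεv, hε1, hε0⟩ := (h2.and (h3.and h4)).exists
    obtain ⟨U, Lo, hU, hLo, hIneq⟩ := main ε hε0 hε1
    filter_upwards [hLo.eventually_const_lt hεv, hIneq] with t h1t h2t
    exact lt_of_lt_of_le h1t h2t.1
  · intro v hv
    set φ : ℝ → ℝ :=
      fun ε => (1+ε) * (1+ε) * (A*B) * (((1-ε)*B) ^ (-γ) * Real.Gamma γ / β) with hφ
    have hcont : ContinuousAt φ 0 := by
      apply ContinuousAt.mul
      · fun_prop
      · apply ContinuousAt.div_const
        apply ContinuousAt.mul _ continuousAt_const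
        have hin : ContinuousAt (fun ε : ℝ => (1-ε)*B) 0 := by fun_prop
        have h1 : ContinuousAt (fun x : ℝ => x ^ (-γ)) ((fun ε : ℝ => (1-ε)*B) 0) :=
          Real.continuousAt_rpow_const _ _ (Or.inl (by norm_num; exact hB.ne'))
        exact ContinuousAt.comp (g := fun x : ℝ => x ^ (-γ))
          (f := fun ε : ℝ => (1-ε)*B) h1 hin
    have hval : φ 0 = L := by
      rw [hφ]
      norm_num
      rw [hL, hBγ]
      ring
    have hφtend : Tendsto φ (nhds 0) (nhds L) := hval ▸ hcont
    have h2 : ∀ᶠ ε in nhdsWithin 0 (Set.Ioi (0:ℝ)), φ ε < v :=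
      (hφtend.eventually_lt_const hv).filter_mono nhdsWithin_le_nhds
    have h3 : ∀ᶠ ε in nhdsWithin 0 (Set.Ioi (0:ℝ)), ε < 1 :=
      (eventually_lt_nhds zero_lt_one).filter_mono nhdsWithin_le_nhds
    have h4 : ∀ᶠ ε in nhdsWithin 0 (Set.Ioi (0:ℝ)), 0 < ε := eventually_mem_nhdsWithin
    obtain ⟨ε, hεv, hε1, hε0⟩ := (h2.and (h3.and h4)).exists
    obtain ⟨U, Lo, hU, hLo, hIneq⟩ := main ε hε0 hε1
    filter_upwards [hU.eventually_lt_const hεv, hIneq] with t h1t h2t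
    exact lt_of_le_of_lt h2t.2 h1t
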